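/- Let a ∈ C³[0,1] and b ∈ C²[0,1] be real-valued, let λ_n (n ≥ 1) be the eigenvalues of the damped wave eigenvalue problem in the upper half-plane enumeration, and set c_0 = −⟨a⟩. Then for real λ → +∞, Σ_{n=1}^∞ ((π²n² − |λ_n|² + 2λ Re λ_n)/(π²n² + λ²))² = c_0² λ^{−1} + O(λ^{−2}). -/

import Mathlib

set_option maxHeartbeats 1000000

open Real Filter Topology

lemma key_est (l : ℝ) (hl : 1 ≤ l) :
    Summable (fun n : ℕ => 1 / (π ^ 2 * ((n : ℝ) + 1) ^ 2 + l ^ 2) ^ 2) ∧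
    |(∑' n : ℕ, 1 / (π ^ 2 * ((n : ℝ) + 1) ^ 2 + l ^ 2) ^ 2) - 1 / (4 * l ^ 3)|
      ≤ 1 / l ^ 4 := by
  have hl0 : 0 < l := lt_of_lt_of_le one_pos hl
  have hpi : (1:ℝ) ≤ π ^ 2 := by nlinarith [Real.pi_gt_three]
  set f : ℝ → ℝ := fun x => 1 / (π ^ 2 * x ^ 2 + l ^ 2) ^ 2 with hf
  set G : ℝ → ℝ := fun x => x / (2 * l ^ 2 * (π ^ 2 * x ^ 2 + l ^ 2))
      + Real.arctan (π * x / l) / (2 * π * l ^ 3) with hG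
  have hden : ∀ x : ℝ, 0 < π ^ 2 * x ^ 2 + l ^ 2 := fun x => by positivity
  -- derivative
  have hderiv : ∀ x : ℝ, HasDerivAt G (f x) x := by
    intro x
    have h1 : HasDerivAt (fun x : ℝ => x / (2 * l ^ 2 * (π ^ 2 * x ^ 2 + l ^ 2)))
        ((2 * l ^ 2 * (π ^ 2 * x ^ 2 + l ^ 2) - x * (2 * l ^ 2 * (π ^ 2 * (2*x) + 0)))
          / (2 * l ^ 2 * (π ^ 2 * x ^ 2 + l ^ 2)) ^ 2) x := by
      have hx : HasDerivAt (fun x : ℝ => x) 1 x := hasDerivAt_id x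
      have hd : HasDerivAt (fun x : ℝ => 2 * l ^ 2 * (π ^ 2 * x ^ 2 + l ^ 2))
          (2 * l ^ 2 * (π ^ 2 * (2*x) + 0)) x := by
        have : HasDerivAt (fun x : ℝ => π ^ 2 * x ^ 2 + l ^ 2) (π ^ 2 * (2*x) + 0) x := by
          exact (((hasDerivAt_pow 2 x).const_mul (π ^ 2)).add_const (l^2)).congr_deriv (by ring)
        exact this.const_mul _
      have := hx.div hd (by have := hden x; positivity)
      exact this.congr_deriv (by ring)
    have h2 : HasDerivAt (fun x : ℝ => Real.arctan (π * x / l) / (2 * π * l ^ 3))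
        ((1 / (1 + (π * x / l) ^ 2) * (π / l)) / (2 * π * l ^ 3)) x := by
      have hin : HasDerivAt (fun x : ℝ => π * x / l) (π / l) x := by
        simpa using ((hasDerivAt_id x).const_mul π).div_const l
      exact ((Real.hasDerivAt_arctan (π * x / l)).comp x hin).div_const _
    have := h1.add h2
    refine this.congr_deriv ?_
    have hpi0 : (0:ℝ) < π := Real.pi_pos
    rw [hf]
    field_simp
    ring
  -- antitone on nonneg
  have hanti : ∀ x y : ℝ, 0 ≤ x → x ≤ y → f y ≤ f x := by
    intro x y hx hxy
    have h1 := hden x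
    have h2 := hden y
    rw [hf]
    simp only
    have hxy2 : x ^ 2 ≤ y ^ 2 := pow_le_pow_left₀ hx hxy 2
    have huv : π ^ 2 * x ^ 2 + l ^ 2 ≤ π ^ 2 * y ^ 2 + l ^ 2 := by nlinarith [sq_nonneg π]
    rw [div_le_div_iff₀ (by positivity) (by positivity)]
    nlinarith [pow_le_pow_left₀ h1.le huv 2]
  -- MVT step bounds
  have hstep : ∀ n : ℕ, f ((n:ℝ) + 1) ≤ G ((n:ℝ)+1) - G n ∧ G ((n:ℝ)+1) - G n ≤ f n := by
    intro n
    obtain ⟨c, hc, hceq⟩ := exists_hasDerivAt_eq_slope G f (by linarith : (n:ℝ) < n+1)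
      (fun x _ => (hderiv x).continuousAt.continuousWithinAt) (fun x _ => hderiv x)
    rw [show ((n:ℝ)+1) - n = 1 by ring, div_one] at hceq
    constructor
    · rw [← hceq]
      exact hanti c ((n:ℝ)+1) (le_of_lt (lt_of_le_of_lt n.cast_nonneg hc.1)) (le_of_lt hc.2)
    · rw [← hceq]; exact hanti (n:ℝ) c (n.cast_nonneg) (le_of_lt hc.1)
  -- summability
  have hgsum : Summable (fun n : ℕ => 1 / ((n : ℝ) + 1) ^ 2) := by
    have h0 : Summable (fun n : ℕ => 1 / (n : ℝ) ^ 2) :=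
      Real.summable_one_div_nat_pow.mpr one_lt_two
    have := (summable_nat_add_iff 1).mpr h0
    simpa using this
  have hsum1 : Summable (fun n : ℕ => f ((n : ℝ) + 1)) := by
    apply Summable.of_nonneg_of_le (fun n => by rw [hf]; positivity) _ hgsum
    intro n
    rw [hf]
    simp only
    have hb : ((n:ℝ)+1)^2 ≤ (π ^ 2 * ((n:ℝ)+1) ^ 2 + l ^ 2) ^ 2 := by
      nlinarith [sq_nonneg ((n:ℝ)+1), sq_nonneg (π ^ 2 * ((n:ℝ)+1) ^ 2 + l ^ 2 - 1),
        hden ((n:ℝ)+1)]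
    exact one_div_le_one_div_of_le (by positivity) hb
  -- telescoping
  have hG0 : G 0 = 0 := by simp [hG]
  have htel : ∀ N : ℕ, ∑ k ∈ Finset.range N, (G ((k:ℝ)+1) - G k) = G N := by
    intro N
    have := Finset.sum_range_sub (fun k : ℕ => G k) N
    simp only [Nat.cast_add, Nat.cast_one, Nat.cast_zero] at this
    rw [this, hG0, sub_zero]
  -- limit of G
  have harct : Tendsto (fun N : ℕ => Real.arctan (π * (N:ℝ) / l) / (2 * π * l ^ 3))
      atTop (𝓝 ((π / 2) / (2 * π * l ^ 3))) := by
    apply Tendsto.div_const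
    have h1 : Tendsto (fun N : ℕ => π * (N:ℝ) / l) atTop atTop := by
      apply Tendsto.atTop_div_const hl0
      exact (tendsto_natCast_atTop_atTop).const_mul_atTop Real.pi_pos
    exact (Real.tendsto_arctan_atTop.mono_right nhdsWithin_le_nhds).comp h1
  have hterm1 : Tendsto (fun N : ℕ => (N:ℝ) / (2 * l ^ 2 * (π ^ 2 * (N:ℝ) ^ 2 + l ^ 2)))
      atTop (𝓝 0) := by
    apply squeeze_zero (fun N => by positivity)
      (g := fun N : ℕ => 1 / (2 * l ^ 2 * π ^ 2) * (1 / (N:ℝ)))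
    · intro N
      rcases Nat.eq_zero_or_pos N with h | h
      · simp [h]
      · have hN : (0:ℝ) < N := by exact_mod_cast h
        have h1 : (N:ℝ) / (2 * l ^ 2 * (π ^ 2 * (N:ℝ) ^ 2 + l ^ 2))
            ≤ (N:ℝ) / (2 * l ^ 2 * (π ^ 2 * (N:ℝ) ^ 2)) := by
          apply div_le_div_of_nonneg_left (le_of_lt hN) (by positivity)
          nlinarith [sq_nonneg l]
        have h2 : (N:ℝ) / (2 * l ^ 2 * (π ^ 2 * (N:ℝ) ^ 2))
            = 1 / (2 * l ^ 2 * π ^ 2) * (1 / (N:ℝ)) := by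
          field_simp
        rw [← h2]; exact h1
    · have := tendsto_one_div_atTop_nhds_zero_nat.const_mul (1 / (2 * l ^ 2 * π ^ 2))
      simpa using this
  have hGlim : Tendsto (fun N : ℕ => G N) atTop (𝓝 (1 / (4 * l ^ 3))) := by
    have := hterm1.add harct
    have heq : (0:ℝ) + (π / 2) / (2 * π * l ^ 3) = 1 / (4 * l ^ 3) := by
      rw [zero_add, div_eq_div_iff (by positivity) (by positivity)]
      ring
    rw [heq] at this
    exact this
  -- comparison
  set S₁ : ℝ := ∑' n : ℕ, f ((n:ℝ) + 1) with hS₁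
  have hpart := hsum1.hasSum.tendsto_sum_nat
  have hub : S₁ ≤ 1 / (4 * l ^ 3) := by
    apply le_of_tendsto_of_tendsto' hpart hGlim
    intro N
    rw [← htel N]
    exact Finset.sum_le_sum fun k _ => (hstep k).1
  have hsum1' : Summable (fun n : ℕ => f (((n + 1 : ℕ)):ℝ)) := by
    simpa [Nat.cast_add, Nat.cast_one] using hsum1
  have hsum0 : Summable (fun n : ℕ => f n) := (summable_nat_add_iff 1).mp hsum1'
  have htsum0 : ∑' n : ℕ, f n = f 0 + S₁ := by
    rw [Summable.tsum_eq_zero_add hsum0, hS₁]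
    congr 1
    · norm_num
    · exact tsum_congr fun n => by push_cast; ring_nf
  have hlb : 1 / (4 * l ^ 3) ≤ f 0 + S₁ := by
    rw [← htsum0]
    apply le_of_tendsto_of_tendsto' hGlim hsum0.hasSum.tendsto_sum_nat
    intro N
    rw [← htel N]
    exact Finset.sum_le_sum fun k _ => (hstep k).2
  have hf0 : f 0 = 1 / l ^ 4 := by
    rw [hf]; norm_num; ring_nf
  constructor
  · exact hsum1
  · rw [abs_le]
    constructor <;> linarith



/-- `⟨f⟩ = ∫₀¹ f(x) dx` for a function on `[0,1]`. -/
noncomputable def intAvg (f : ℝ → ℝ) : ℝ := ∫ x in (0:ℝ)..1, f x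

/-- `λ` is an eigenvalue of the damped wave eigenvalue problem
`u'' − (λ² + 2λa − b)u = 0` on `(0,1)`, `u(0) = u(1) = 0`. -/
def IsDampedEigenvalue (a b : ℝ → ℝ) (l : ℂ) : Prop :=
  ∃ u : ℝ → ℂ,
    ContDiffOn ℝ 2 u (Set.Icc 0 1) ∧
    (∃ x ∈ Set.Icc (0:ℝ) 1, u x ≠ 0) ∧
    (∀ x ∈ Set.Ioo (0:ℝ) 1,
      deriv (deriv u) x = (l ^ 2 + 2 * l * (a x : ℂ) - (b x : ℂ)) * u x) ∧
    u 0 = 0 ∧ u 1 = 0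

/-- for `a ∈ C³[0,1]`, `b ∈ C²[0,1]`, let `Λ n` (`n ≥ 1`) be the
eigenvalues in the upper half-plane enumeration and `c₀ = −⟨a⟩`. Then for real
`λ → +∞`,
`Σ_{n≥1} ((π²n² − |Λ n|² + 2λ Re Λ n)/(π²n² + λ²))² = c₀² λ^{−1} + O(λ^{−2})`. -/
theorem second_power_series_asymptotics (a b : ℝ → ℝ)
    (ha : ContDiffOn ℝ 3 a (Set.Icc 0 1))
    (hb : ContDiffOn ℝ 2 b (Set.Icc 0 1))
    (Λ : ℕ → ℂ)
    (hev : ∀ n : ℕ, 1 ≤ n → IsDampedEigenvalue a b (Λ n))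
    (hup : ∀ n : ℕ, 1 ≤ n → 0 ≤ (Λ n).im)
    (hmono : ∀ n k : ℕ, 1 ≤ n → n ≤ k → (Λ n).im ≤ (Λ k).im)
    (c0 r : ℝ) (hc0 : c0 = -intAvg a) (hr : r = intAvg (fun x => (a x) ^ 2 + b x))
    (habs : ∃ K : ℝ, ∀ n : ℕ, 1 ≤ n →
      |‖Λ n‖ ^ 2 - (Real.pi ^ 2 * (n : ℝ) ^ 2 - r + c0 ^ 2)| ≤ K / (n : ℝ) ^ 2)
    (hre : ∃ K : ℝ, ∀ n : ℕ, 1 ≤ n → |(Λ n).re - c0| ≤ K / (n : ℝ) ^ 2) :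
    ∃ C R : ℝ, 0 < R ∧ ∀ l : ℝ, R ≤ l →
      Summable (fun n : ℕ =>
        ((Real.pi ^ 2 * ((n : ℝ) + 1) ^ 2 - ‖Λ (n + 1)‖ ^ 2
          + 2 * l * (Λ (n + 1)).re) / (Real.pi ^ 2 * ((n : ℝ) + 1) ^ 2 + l ^ 2)) ^ 2) ∧
      |(∑' n : ℕ,
          ((Real.pi ^ 2 * ((n : ℝ) + 1) ^ 2 - ‖Λ (n + 1)‖ ^ 2
            + 2 * l * (Λ (n + 1)).re) / (Real.pi ^ 2 * ((n : ℝ) + 1) ^ 2 + l ^ 2)) ^ 2)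
        - c0 ^ 2 / l| ≤ C / l ^ 2 := by
  obtain ⟨K₁, hK₁⟩ := habs
  obtain ⟨K₂, hK₂⟩ := hre
  have hK₁0 : 0 ≤ K₁ := by
    have h := hK₁ 1 le_rfl
    have h2 : (0:ℝ) ≤ K₁ / ((1:ℕ):ℝ) ^ 2 := (abs_nonneg _).trans h
    norm_num at h2
    exact h2
  have hK₂0 : 0 ≤ K₂ := by
    have h := hK₂ 1 le_rfl
    have h2 : (0:ℝ) ≤ K₂ / ((1:ℕ):ℝ) ^ 2 := (abs_nonneg _).trans h
    norm_num at h2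
    exact h2
  set B : ℝ := r - c0 ^ 2 with hB
  set CA : ℝ := 2 * |c0| + |B| with hCA
  set Cδ : ℝ := K₁ + 2 * K₂ with hCδ
  set M₁ : ℝ := 2 * CA * Cδ + Cδ ^ 2 with hM₁
  set T : ℝ := ∑' n : ℕ, 1 / ((n : ℝ) + 1) ^ 2 with hT
  have hgsum : Summable (fun n : ℕ => 1 / ((n : ℝ) + 1) ^ 2) := by
    have h0 : Summable (fun n : ℕ => 1 / (n : ℝ) ^ 2) :=
      Real.summable_one_div_nat_pow.mpr one_lt_two
    have := (summable_nat_add_iff 1).mpr h0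
    simpa using this
  have hT0 : 0 ≤ T := tsum_nonneg fun n => by positivity
  have hCA0 : 0 ≤ CA := by positivity
  have hCδ0 : 0 ≤ Cδ := by positivity
  have hM₁0 : 0 ≤ M₁ := by positivity
  refine ⟨CA ^ 2 + |c0| * |B| + B ^ 2 / 4 + M₁ * T, 1, one_pos, fun l hl => ?_⟩
  have hl0 : 0 < l := lt_of_lt_of_le one_pos hl
  have hpi : (1:ℝ) ≤ π ^ 2 := by nlinarith [Real.pi_gt_three]
  obtain ⟨hSsum, hSest⟩ := key_est l hl
  set A : ℝ := 2 * l * c0 + B with hA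
  set d : ℕ → ℝ := fun n => π ^ 2 * ((n : ℝ) + 1) ^ 2 + l ^ 2 with hd
  set δ : ℕ → ℝ := fun n => π ^ 2 * ((n : ℝ) + 1) ^ 2 - ‖Λ (n + 1)‖ ^ 2
      + 2 * l * (Λ (n + 1)).re - A with hδ
  set e : ℕ → ℝ := fun n => (2 * A * δ n + δ n ^ 2) / (d n) ^ 2 with he
  have hd0 : ∀ n : ℕ, 0 < d n := fun n => by simp only [hd]; positivity
  have hdl : ∀ n : ℕ, l ^ 2 ≤ d n := fun n => by
    simp only [hd]; nlinarith [sq_nonneg ((n:ℝ)+1)]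
  have hdn : ∀ n : ℕ, ((n:ℝ) + 1) ^ 2 ≤ d n := fun n => by
    simp only [hd]; nlinarith [sq_nonneg ((n:ℝ)+1), sq_nonneg l]
  have hAbd : |A| ≤ l * CA := by
    calc |A| ≤ 2 * l * |c0| + |B| := by
          rw [hA]
          refine (abs_add_le _ _).trans ?_
          rw [abs_mul, abs_of_nonneg (by positivity : (0:ℝ) ≤ 2 * l)]
      _ ≤ l * CA := by rw [hCA]; nlinarith [abs_nonneg B, abs_nonneg c0]
  have hδbd : ∀ n, |δ n| ≤ l * Cδ / ((n:ℝ) + 1) ^ 2 := by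
    intro n
    have h1 := hK₁ (n + 1) (Nat.le_add_left 1 n)
    have h2 := hK₂ (n + 1) (Nat.le_add_left 1 n)
    push_cast at h1 h2
    have heq : δ n = -(‖Λ (n + 1)‖ ^ 2 - (π ^ 2 * ((n:ℝ)+1) ^ 2 - r + c0 ^ 2))
        + 2 * l * ((Λ (n + 1)).re - c0) := by
      simp only [hδ, hA, hB]; ring
    rw [heq]
    have ha1 : |-(‖Λ (n + 1)‖ ^ 2 - (π ^ 2 * ((n:ℝ)+1) ^ 2 - r + c0 ^ 2))|
        ≤ K₁ / ((n:ℝ)+1) ^ 2 := by rw [abs_neg]; exact h1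
    have ha2 : |2 * l * ((Λ (n + 1)).re - c0)| ≤ 2 * l * (K₂ / ((n:ℝ)+1) ^ 2) := by
      rw [abs_mul, abs_of_nonneg (by positivity : (0:ℝ) ≤ 2 * l)]
      exact mul_le_mul_of_nonneg_left h2 (by positivity)
    have h3 := (abs_add_le _ _).trans (add_le_add ha1 ha2)
    refine h3.trans ?_
    have h4 : K₁ / ((n:ℝ)+1) ^ 2 + 2 * l * (K₂ / ((n:ℝ)+1) ^ 2)
        = (K₁ + 2 * l * K₂) / ((n:ℝ)+1) ^ 2 := by ring
    rw [h4, hCδ]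
    have h5 : K₁ + 2 * l * K₂ ≤ l * (K₁ + 2 * K₂) := by
      have : K₁ ≤ l * K₁ := le_mul_of_one_le_left hK₁0 hl
      linarith
    have hp : (0:ℝ) < ((n:ℝ)+1) ^ 2 := by positivity
    exact div_le_div_of_nonneg_right h5 hp.le
  -- pointwise decomposition
  have hterm_eq : (fun n : ℕ =>
        ((Real.pi ^ 2 * ((n : ℝ) + 1) ^ 2 - ‖Λ (n + 1)‖ ^ 2
          + 2 * l * (Λ (n + 1)).re) / (Real.pi ^ 2 * ((n : ℝ) + 1) ^ 2 + l ^ 2)) ^ 2)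
      = fun n => A ^ 2 * (1 / (d n) ^ 2) + e n := by
    funext n
    have hnum : Real.pi ^ 2 * ((n : ℝ) + 1) ^ 2 - ‖Λ (n + 1)‖ ^ 2
        + 2 * l * (Λ (n + 1)).re = A + δ n := by rw [hδ]; ring
    rw [hnum]
    simp only [he, hd]
    rw [div_pow, show (A + δ n) ^ 2 = A ^ 2 + (2 * A * δ n + δ n ^ 2) from by ring,
      add_div, mul_one_div]
  -- bound on e
  have hebd : ∀ n, |e n| ≤ M₁ / l ^ 2 * (1 / ((n:ℝ) + 1) ^ 2) := by
    intro n
    have hδn := hδbd n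
    have hd0n := hd0 n
    have hn1 : (1:ℝ) ≤ ((n:ℝ)+1) ^ 2 := by nlinarith [Nat.cast_nonneg (α := ℝ) n]
    have hdln : l ^ 2 * ((n:ℝ)+1) ^ 2 ≤ (d n) ^ 2 := by
      nlinarith [hdl n, hdn n, hd0 n, sq_nonneg l]
    have hdl4 : l ^ 4 ≤ (d n) ^ 2 := by nlinarith [hdl n, hd0 n, sq_nonneg l]
    have habs1 : |2 * A * δ n + δ n ^ 2| ≤ 2 * |A| * |δ n| + |δ n| ^ 2 := by
      calc |2 * A * δ n + δ n ^ 2| ≤ |2 * A * δ n| + |δ n ^ 2| := abs_add_le _ _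
        _ = 2 * |A| * |δ n| + |δ n| ^ 2 := by rw [abs_mul, abs_mul, abs_two, abs_pow]
    have hnum_bd : 2 * |A| * |δ n| + |δ n| ^ 2 ≤ M₁ * l ^ 2 / ((n:ℝ)+1) ^ 2 := by
      have h1 : 2 * |A| * |δ n| ≤ 2 * (l * CA) * (l * Cδ / ((n:ℝ)+1) ^ 2) := by
        calc 2 * |A| * |δ n| = 2 * (|A| * |δ n|) := by ring
          _ ≤ 2 * ((l * CA) * (l * Cδ / ((n:ℝ)+1) ^ 2)) := by
              have := mul_le_mul hAbd hδn (abs_nonneg (δ n))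
                (by positivity : (0:ℝ) ≤ l * CA)
              linarith
          _ = 2 * (l * CA) * (l * Cδ / ((n:ℝ)+1) ^ 2) := by ring
      have h2 : |δ n| ^ 2 ≤ (l * Cδ / ((n:ℝ)+1) ^ 2) ^ 2 := by
        exact pow_le_pow_left₀ (abs_nonneg _) hδn 2
      have h3 : (l * Cδ / ((n:ℝ)+1) ^ 2) ^ 2 ≤ l ^ 2 * Cδ ^ 2 / ((n:ℝ)+1) ^ 2 := by
        rw [div_pow, div_le_div_iff₀ (by positivity) (by positivity)]
        have hq : ((n:ℝ)+1) ^ 2 * 1 ≤ ((n:ℝ)+1) ^ 2 * ((n:ℝ)+1) ^ 2 :=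
          mul_le_mul_of_nonneg_left hn1 (by positivity)
        nlinarith [mul_le_mul_of_nonneg_left hq (sq_nonneg (l * Cδ))]
      have h4 : 2 * (l * CA) * (l * Cδ / ((n:ℝ)+1) ^ 2) = 2 * CA * Cδ * l ^ 2 / ((n:ℝ)+1) ^ 2 := by
        field_simp <;> ring
      rw [hM₁]
      rw [h4] at h1
      have := add_le_add h1 (h2.trans h3)
      calc 2 * |A| * |δ n| + |δ n| ^ 2
          ≤ 2 * CA * Cδ * l ^ 2 / ((n:ℝ)+1) ^ 2 + l ^ 2 * Cδ ^ 2 / ((n:ℝ)+1) ^ 2 := this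
        _ = (2 * CA * Cδ + Cδ ^ 2) * l ^ 2 / ((n:ℝ)+1) ^ 2 := by ring
    have : |e n| = |2 * A * δ n + δ n ^ 2| / (d n) ^ 2 := by
      simp only [he]
      rw [abs_div, abs_of_pos (by positivity : (0:ℝ) < (d n) ^ 2)]
    rw [this]
    rw [div_le_iff₀ (by positivity : (0:ℝ) < (d n) ^ 2)]
    have hrhs : M₁ / l ^ 2 * (1 / ((n:ℝ) + 1) ^ 2) * (d n) ^ 2
        = M₁ * (d n) ^ 2 / (l ^ 2 * ((n:ℝ)+1) ^ 2) := by field_simp <;> ring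
    rw [hrhs, le_div_iff₀ (by positivity)]
    calc |2 * A * δ n + δ n ^ 2| * (l ^ 2 * ((n:ℝ)+1) ^ 2)
        ≤ (M₁ * l ^ 2 / ((n:ℝ)+1) ^ 2) * (l ^ 2 * ((n:ℝ)+1) ^ 2) := by
          exact mul_le_mul_of_nonneg_right (habs1.trans hnum_bd) (by positivity)
      _ = M₁ * l ^ 4 := by field_simp <;> ring
      _ ≤ M₁ * (d n) ^ 2 := mul_le_mul_of_nonneg_left hdl4 hM₁0
  -- summability
  have hesum_abs : Summable (fun n => |e n|) := by
    apply Summable.of_nonneg_of_le (fun n => abs_nonneg _) hebd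
    exact hgsum.mul_left _
  have hesum : Summable e := hesum_abs.of_abs
  have hsum_inv : Summable (fun n : ℕ => 1 / (d n) ^ 2) := hSsum
  have hsum_main : Summable (fun n : ℕ => A ^ 2 * (1 / (d n) ^ 2) + e n) :=
    (hsum_inv.mul_left (A ^ 2)).add hesum
  constructor
  · rw [hterm_eq]; exact hsum_main
  · rw [hterm_eq]
    rw [Summable.tsum_add (hsum_inv.mul_left (A ^ 2)) hesum, tsum_mul_left]
    set S : ℝ := ∑' n : ℕ, 1 / (d n) ^ 2 with hS
    set E : ℝ := ∑' n, e n with hE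
    have hEbd : |E| ≤ M₁ * T / l ^ 2 := by
      have h1 : |E| ≤ ∑' n, |e n| := by
        rw [hE]
        have := norm_tsum_le_tsum_norm (f := e) (by simpa [Real.norm_eq_abs] using hesum_abs)
        simpa [Real.norm_eq_abs] using this
      have h2 : ∑' n, |e n| ≤ ∑' n : ℕ, M₁ / l ^ 2 * (1 / ((n:ℝ) + 1) ^ 2) :=
        Summable.tsum_le_tsum hebd hesum_abs (hgsum.mul_left _)
      have h3 : ∑' n : ℕ, M₁ / l ^ 2 * (1 / ((n:ℝ) + 1) ^ 2) = M₁ * T / l ^ 2 := by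
        rw [tsum_mul_left, hT]; ring
      linarith
    -- main estimate
    have hSbd : |S - 1 / (4 * l ^ 3)| ≤ 1 / l ^ 4 := hSest
    have hmain : |A ^ 2 * S - c0 ^ 2 / l| ≤ (CA ^ 2 + |c0| * |B| + B ^ 2 / 4) / l ^ 2 := by
      have hid : A ^ 2 * S - c0 ^ 2 / l
          = A ^ 2 * (S - 1 / (4 * l ^ 3)) + c0 * B / l ^ 2 + B ^ 2 / (4 * l ^ 3) := by
        rw [hA]
        field_simp
        ring
      rw [hid]
      have h1 : |A ^ 2 * (S - 1 / (4 * l ^ 3))| ≤ CA ^ 2 / l ^ 2 := by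
        rw [abs_mul, abs_pow]
        have hA2 : |A| ^ 2 ≤ l ^ 2 * CA ^ 2 := by nlinarith [abs_nonneg A]
        calc |A| ^ 2 * |S - 1 / (4 * l ^ 3)| ≤ (l ^ 2 * CA ^ 2) * (1 / l ^ 4) := by
              exact mul_le_mul hA2 hSbd (abs_nonneg _) (by positivity)
          _ = CA ^ 2 / l ^ 2 := by field_simp <;> ring
      have h2 : |c0 * B / l ^ 2| ≤ |c0| * |B| / l ^ 2 := by
        rw [abs_div, abs_mul, abs_of_pos (by positivity : (0:ℝ) < l ^ 2)]
      have h3 : |B ^ 2 / (4 * l ^ 3)| ≤ B ^ 2 / (4 * l ^ 2) := by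
        rw [abs_div, abs_of_pos (by positivity : (0:ℝ) < 4 * l ^ 3), abs_of_nonneg (sq_nonneg B)]
        apply div_le_div_of_nonneg_left (sq_nonneg B) (by positivity)
        nlinarith
      calc |A ^ 2 * (S - 1 / (4 * l ^ 3)) + c0 * B / l ^ 2 + B ^ 2 / (4 * l ^ 3)|
          ≤ |A ^ 2 * (S - 1 / (4 * l ^ 3))| + |c0 * B / l ^ 2| + |B ^ 2 / (4 * l ^ 3)| := by
            exact (abs_add_le _ _).trans (by gcongr; exact abs_add_le _ _)
        _ ≤ CA ^ 2 / l ^ 2 + |c0| * |B| / l ^ 2 + B ^ 2 / (4 * l ^ 2) := by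
            gcongr
        _ = (CA ^ 2 + |c0| * |B| + B ^ 2 / 4) / l ^ 2 := by field_simp <;> ring
    calc |A ^ 2 * S + E - c0 ^ 2 / l|
        ≤ |A ^ 2 * S - c0 ^ 2 / l| + |E| := by
          have : A ^ 2 * S + E - c0 ^ 2 / l = (A ^ 2 * S - c0 ^ 2 / l) + E := by ring
          rw [this]; exact abs_add_le _ _
      _ ≤ (CA ^ 2 + |c0| * |B| + B ^ 2 / 4) / l ^ 2 + M₁ * T / l ^ 2 := add_le_add hmain hEbd
      _ = (CA ^ 2 + |c0| * |B| + B ^ 2 / 4 + M₁ * T) / l ^ 2 := by ring
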